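/- Fix c ∈ ℝ and λ ∈ ℂ with Re(λ) = c. Then there exists a sequence (f_k) of locally absolutely continuous functions with f_k ∈ H_c, f_k′ ∈ H_c, ‖f_k‖_c = 1 for all k, and ‖f_k′ − λ f_k‖_c → 0 as k → ∞. Consequently, every point of the vertical line {Re(s) = c} belongs to the (approximate point) spectrum of the infinitesimal shift ∂ on H_c. -/

import Mathlib

open MeasureTheory Filter Topology intervalIntegral

/-- The weighted measure defining the Hilbert space `H_c = L²(ℝ, e^{−2ct} dt)`. -/
noncomputable def weightedMeasure (c : ℝ) : Measure ℝ :=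
  (volume : Measure ℝ).withDensity fun t => ENNReal.ofReal (Real.exp (-2 * c * t))

lemma eLpNorm_weighted_eq (c : ℝ) {h : ℝ → ℂ} {H : ℝ → ℝ} (hc : Continuous h)
    (hH : ∀ t, ‖h t‖ ^ 2 * Real.exp (-2 * c * t) = H t) (hInt : Integrable H) :
    eLpNorm h 2 (weightedMeasure c) = (ENNReal.ofReal (∫ t, H t)) ^ ((2:ℝ)⁻¹) := by
  have hw : Measurable fun t : ℝ => ENNReal.ofReal (Real.exp (-2 * c * t)) :=
    (Real.measurable_exp.comp (measurable_const.mul measurable_id)).ennreal_ofReal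
  have hg : Measurable fun t : ℝ => (‖h t‖₊ : ENNReal) ^ (2:ℝ) :=
    (hc.measurable.nnnorm.coe_nnreal_ennreal).pow_const _
  rw [eLpNorm_eq_lintegral_rpow_enorm_toReal two_ne_zero ENNReal.ofNat_ne_top]
  simp only [enorm_eq_nnnorm]
  have h2 : (2 : ENNReal).toReal = 2 := by simp
  rw [h2, weightedMeasure, lintegral_withDensity_eq_lintegral_mul _ hw hg]
  have hpt : ∀ t : ℝ, (ENNReal.ofReal (Real.exp (-2 * c * t)) * (‖h t‖₊ : ENNReal) ^ (2:ℝ))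
      = ENNReal.ofReal (H t) := by
    intro t
    rw [← enorm_eq_nnnorm, ← ofReal_norm, ENNReal.ofReal_rpow_of_nonneg (norm_nonneg _) (by norm_num),
      ← ENNReal.ofReal_mul (Real.exp_pos _).le, ← hH t]
    norm_num [mul_comm, Real.rpow_natCast]
  have hI : (∫⁻ t, (((fun t : ℝ => ENNReal.ofReal (Real.exp (-2 * c * t))) *
      fun t => (‖h t‖₊ : ENNReal) ^ (2:ℝ)) t)) = ENNReal.ofReal (∫ t, H t) := by
    rw [ofReal_integral_eq_lintegral_ofReal hInt (by
      filter_upwards with t; rw [← hH t]; positivity)]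
    exact lintegral_congr fun t => hpt t
  rw [hI]; norm_num

lemma memLp_weighted (c : ℝ) {h : ℝ → ℂ} {H : ℝ → ℝ} (hc : Continuous h)
    (hH : ∀ t, ‖h t‖ ^ 2 * Real.exp (-2 * c * t) = H t) (hInt : Integrable H) :
    MemLp h 2 (weightedMeasure c) := by
  refine ⟨hc.aestronglyMeasurable, ?_⟩
  rw [eLpNorm_weighted_eq c hc hH hInt]
  exact ENNReal.rpow_lt_top_of_nonneg (by norm_num) ENNReal.ofReal_ne_top

/-- **The vertical line `Re(s) = c` lies in the spectrum of the infinitesimal shift**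
(part of Theorem 4.1): for every `λ` with `Re(λ) = c` there is a sequence of locally
absolutely continuous functions `f_k ∈ H_c` with a.e. derivatives `f_k′ ∈ H_c`,
`‖f_k‖_c = 1`, and `‖f_k′ − λ f_k‖_c → 0`; i.e. `λ` is an approximate eigenvalue of `∂`. -/
theorem infinitesimalShift_approx_spectrum (c : ℝ) (lam : ℂ) (hlam : lam.re = c) :
    ∃ f d : ℕ → ℝ → ℂ,
      (∀ k, MemLp (f k) 2 (weightedMeasure c)) ∧
      (∀ k, MemLp (d k) 2 (weightedMeasure c)) ∧
      (∀ k, LocallyIntegrable (d k) (volume : Measure ℝ)) ∧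
      (∀ k, ∀ x : ℝ, f k x = f k 0 + ∫ t in (0 : ℝ)..x, d k t) ∧
      (∀ k, eLpNorm (f k) 2 (weightedMeasure c) = 1) ∧
      Tendsto (fun k => eLpNorm (fun t => d k t - lam * f k t) 2 (weightedMeasure c))
        atTop (𝓝 0) := by
  set b : ℕ → ℝ := fun k => (((k:ℝ)+1)⁻¹)^2 with hbdef
  set a : ℕ → ℝ := fun k => (Real.sqrt (Real.sqrt Real.pi * ((k:ℝ)+1)))⁻¹ with hadef
  have hk1 : ∀ k : ℕ, (0:ℝ) < (k:ℝ)+1 := fun k => by positivity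
  have hb : ∀ k, 0 < b k := fun k => by positivity
  have ha2 : ∀ k, a k ^ 2 = (Real.sqrt Real.pi * ((k:ℝ)+1))⁻¹ := by
    intro k
    show (Real.sqrt (Real.sqrt Real.pi * ((k:ℝ)+1)))⁻¹ ^ 2 = _
    rw [inv_pow, Real.sq_sqrt (by positivity)]
  set E : ℕ → ℝ → ℂ := fun k t => Complex.exp (lam * t - ((t^2 * b k / 2 : ℝ) : ℂ)) with hEdef
  set f : ℕ → ℝ → ℂ := fun k t => (a k : ℂ) * E k t with hfdef
  set d : ℕ → ℝ → ℂ := fun k t => (a k : ℂ) * ((lam - ((t * b k : ℝ):ℂ)) * E k t) with hddef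
  -- continuity
  have hEcont : ∀ k, Continuous (E k) := by
    intro k
    exact Complex.continuous_exp.comp (by continuity)
  have hfcont : ∀ k, Continuous (f k) := fun k => continuous_const.mul (hEcont k)
  have hdcont : ∀ k, Continuous (d k) := by
    intro k
    exact continuous_const.mul (((continuous_const.sub (by continuity)).mul (hEcont k)))
  -- derivative
  have hderiv : ∀ k t, HasDerivAt (f k) (d k t) t := by
    intro k t
    have h1 : HasDerivAt (fun t : ℝ => (t:ℂ)) 1 t := by
      simpa using (hasDerivAt_id t).ofReal_comp
    have h2 : HasDerivAt (fun t : ℝ => lam * (t:ℂ)) lam t := by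
      simpa using h1.const_mul lam
    have h3 : HasDerivAt (fun t : ℝ => ((t^2 * b k / 2 : ℝ) : ℂ)) ((t * b k : ℝ) : ℂ) t := by
      have h := ((hasDerivAt_pow 2 t).mul_const (b k)).div_const 2
      have h' : HasDerivAt (fun t : ℝ => t^2 * b k / 2) (t * b k) t := by
        exact h.congr_deriv (by push_cast; ring)
      exact h'.ofReal_comp
    have h4 := (h2.sub h3).cexp
    have : HasDerivAt (fun t => f k t) ((a k : ℂ) * (E k t * (lam - ((t * b k : ℝ):ℂ)))) t := by
      exact ((h4).const_mul (a k : ℂ))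
    convert this using 1
    simp only [hddef]
    ring
  -- norm of E
  have hEnorm : ∀ k t, ‖E k t‖ = Real.exp (c * t - t^2 * b k / 2) := by
    intro k t
    have hre : (lam * t - ((t^2 * b k / 2 : ℝ):ℂ)).re = c * t - t^2 * b k / 2 := by
      rw [Complex.sub_re, Complex.ofReal_re, Complex.mul_re]
      simp [hlam]
    rw [hEdef]
    simp only [Complex.norm_exp, hre]
  -- pointwise identity for f
  have hHf : ∀ k t, ‖f k t‖ ^ 2 * Real.exp (-2 * c * t)
      = a k ^ 2 * Real.exp (-(b k) * t ^ 2) := by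
    intro k t
    rw [hfdef]
    simp only [norm_mul, Complex.norm_real, Real.norm_eq_abs, hEnorm]
    rw [mul_pow, sq_abs, mul_assoc]
    congr 1
    rw [pow_two, mul_assoc, ← Real.exp_add, ← Real.exp_add]
    congr 1; ring
  -- pointwise identity for the error
  have hHe : ∀ k t, ‖d k t - lam * f k t‖ ^ 2 * Real.exp (-2 * c * t)
      = a k ^ 2 * b k ^ 2 * (t ^ 2 * Real.exp (-(b k) * t ^ 2)) := by
    intro k t
    have hdiff : d k t - lam * f k t = ((-(a k * (t * b k)) : ℝ) : ℂ) * E k t := by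
      rw [hddef, hfdef]; push_cast; ring
    rw [hdiff, norm_mul, Complex.norm_real, Real.norm_eq_abs, hEnorm, mul_pow, sq_abs]
    rw [pow_two (Real.exp _), mul_assoc, mul_assoc, ← Real.exp_add, ← Real.exp_add]
    rw [show (-(a k * (t * b k)))^2 = a k ^2 * b k ^2 * t^2 by ring]
    rw [mul_assoc]
    congr 2
    ring
  -- integrability
  have hIf : ∀ k, Integrable (fun t : ℝ => a k ^ 2 * Real.exp (-(b k) * t ^ 2)) :=
    fun k => (integrable_exp_neg_mul_sq (hb k)).const_mul _
  have hIe : ∀ k, Integrable (fun t : ℝ => a k ^ 2 * b k ^ 2 * (t ^ 2 * Real.exp (-(b k) * t ^ 2))) := by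
    intro k
    have h := integrable_rpow_mul_exp_neg_mul_sq (hb k) (s := 2) (by norm_num)
    simp_rw [Real.rpow_two] at h
    exact h.const_mul _
  -- value of the Gaussian integral
  have hsqrtb : ∀ k, Real.sqrt (Real.pi / b k) = Real.sqrt Real.pi * ((k:ℝ)+1) := by
    intro k
    have h : Real.pi / b k = Real.pi * ((k:ℝ)+1)^2 := by
      simp only [hbdef]
      field_simp
    rw [h, Real.sqrt_mul Real.pi_pos.le, Real.sqrt_sq (hk1 k).le]
  have hval : ∀ k, (∫ t : ℝ, a k ^ 2 * Real.exp (-(b k) * t ^ 2)) = 1 := by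
    intro k
    rw [MeasureTheory.integral_const_mul, integral_gaussian, hsqrtb, ha2]
    exact inv_mul_cancel₀ (by positivity)
  have hnorm1 : ∀ k, eLpNorm (f k) 2 (weightedMeasure c) = 1 := by
    intro k
    rw [eLpNorm_weighted_eq c (hfcont k) (hHf k) (hIf k), hval]
    simp
  -- MemLp
  have hmf : ∀ k, MemLp (f k) 2 (weightedMeasure c) :=
    fun k => memLp_weighted c (hfcont k) (hHf k) (hIf k)
  have herrcont : ∀ k, Continuous fun t => d k t - lam * f k t :=
    fun k => (hdcont k).sub (continuous_const.mul (hfcont k))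
  have hmerr : ∀ k, MemLp (fun t => d k t - lam * f k t) 2 (weightedMeasure c) :=
    fun k => memLp_weighted c (herrcont k) (hHe k) (hIe k)
  have hmd : ∀ k, MemLp (d k) 2 (weightedMeasure c) := by
    intro k
    have h := (hmerr k).add ((hmf k).const_mul lam)
    convert h using 1
    funext t
    simp [Pi.add_apply]
  -- bound for the error integral
  have hbound : ∀ k, (∫ t : ℝ, a k ^ 2 * b k ^ 2 * (t ^ 2 * Real.exp (-(b k) * t ^ 2)))
      ≤ 2 * Real.sqrt (2 * Real.pi) * (((k:ℝ)+1))⁻¹ := by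
    intro k
    have hIG : Integrable (fun t : ℝ => a k ^ 2 * b k ^ 2 * ((2 / b k) * Real.exp (-(b k / 2) * t ^ 2))) :=
      ((integrable_exp_neg_mul_sq (by positivity : (0:ℝ) < b k / 2)).const_mul _).const_mul _
    have hpt : ∀ t : ℝ, a k ^ 2 * b k ^ 2 * (t ^ 2 * Real.exp (-(b k) * t ^ 2))
        ≤ a k ^ 2 * b k ^ 2 * ((2 / b k) * Real.exp (-(b k / 2) * t ^ 2)) := by
      intro t
      have h1 : (b k / 2) * t ^ 2 ≤ Real.exp ((b k / 2) * t ^ 2) := by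
        have := Real.add_one_le_exp ((b k / 2) * t ^ 2); linarith
      have h2 : t ^ 2 ≤ (2 / b k) * Real.exp ((b k / 2) * t ^ 2) := by
        have hbk := hb k
        have hpos : (0:ℝ) < 2 / b k := by positivity
        have h4 := mul_le_mul_of_nonneg_left h1 hpos.le
        have heq : (2 / b k) * ((b k / 2) * t ^ 2) = t ^ 2 := by field_simp
        linarith
      have h3 : t ^ 2 * Real.exp (-(b k) * t ^ 2)
          ≤ (2 / b k) * Real.exp (-(b k / 2) * t ^ 2) := by
        calc t ^ 2 * Real.exp (-(b k) * t ^ 2)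
            ≤ ((2 / b k) * Real.exp ((b k / 2) * t ^ 2)) * Real.exp (-(b k) * t ^ 2) :=
              mul_le_mul_of_nonneg_right h2 (Real.exp_pos _).le
          _ = (2 / b k) * Real.exp (-(b k / 2) * t ^ 2) := by
              rw [mul_assoc, ← Real.exp_add]; congr 2; ring
      have ha2' : (0:ℝ) ≤ a k ^ 2 * b k ^ 2 := by positivity
      exact mul_le_mul_of_nonneg_left h3 ha2'
    have hmono := integral_mono (hIe k) hIG hpt
    refine hmono.trans ?_
    rw [MeasureTheory.integral_const_mul, MeasureTheory.integral_const_mul, integral_gaussian]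
    have hsq : Real.sqrt (Real.pi / (b k / 2)) = Real.sqrt (2 * Real.pi) * ((k:ℝ)+1) := by
      have h : Real.pi / (b k / 2) = (2 * Real.pi) * ((k:ℝ)+1)^2 := by
        simp only [hbdef]; field_simp
      rw [h, Real.sqrt_mul (by positivity), Real.sqrt_sq (hk1 k).le]
    rw [hsq, ha2]
    have h1P : (1:ℝ) ≤ Real.sqrt Real.pi := by
      rw [show (1:ℝ) = Real.sqrt 1 by simp]
      exact Real.sqrt_le_sqrt (by linarith [Real.pi_gt_three])
    have hNpos := hk1 k
    have hQ : (0:ℝ) ≤ Real.sqrt (2 * Real.pi) := Real.sqrt_nonneg _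
    simp only [hbdef]
    rw [div_eq_mul_inv]
    have key : (Real.sqrt Real.pi * ((k:ℝ)+1))⁻¹ * ((((k:ℝ)+1)⁻¹)^2)^2 *
        (2 * ((((k:ℝ)+1)⁻¹)^2)⁻¹ * (Real.sqrt (2*Real.pi) * ((k:ℝ)+1)))
        = 2 * Real.sqrt (2*Real.pi) * (((k:ℝ)+1))⁻¹ * (Real.sqrt Real.pi)⁻¹ * (((k:ℝ)+1))⁻¹ := by
      field_simp
    rw [key]
    have hle1 : (Real.sqrt Real.pi)⁻¹ ≤ 1 := by
      rw [inv_le_one_iff₀]; right; exact h1P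
    have hle2 : (((k:ℝ)+1))⁻¹ ≤ 1 := by
      rw [inv_le_one_iff₀]; right; linarith
    have hpos : (0:ℝ) ≤ 2 * Real.sqrt (2*Real.pi) * (((k:ℝ)+1))⁻¹ := by positivity
    calc 2 * Real.sqrt (2*Real.pi) * (((k:ℝ)+1))⁻¹ * (Real.sqrt Real.pi)⁻¹ * (((k:ℝ)+1))⁻¹
        ≤ 2 * Real.sqrt (2*Real.pi) * (((k:ℝ)+1))⁻¹ * 1 * 1 := by
          gcongr
      _ = 2 * Real.sqrt (2*Real.pi) * (((k:ℝ)+1))⁻¹ := by ring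
  -- conclusion
  refine ⟨f, d, hmf, hmd, fun k => ((hdcont k).locallyIntegrable : _), ?_, hnorm1, ?_⟩
  · intro k x
    have h := integral_eq_sub_of_hasDerivAt (fun t _ => hderiv k t)
      ((hdcont k).intervalIntegrable 0 x)
    rw [h]; ring
  · have hupperR : Tendsto (fun k : ℕ => 2 * Real.sqrt (2 * Real.pi) * (((k:ℝ)+1))⁻¹)
        atTop (𝓝 0) := by
      have := tendsto_one_div_add_atTop_nhds_zero_nat.const_mul (2 * Real.sqrt (2 * Real.pi))
      simpa [one_div] using this
    have hupper : Tendsto (fun k : ℕ =>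
        (ENNReal.ofReal (2 * Real.sqrt (2 * Real.pi) * (((k:ℝ)+1))⁻¹)) ^ ((2:ℝ)⁻¹))
        atTop (𝓝 0) := by
      have h1 := ENNReal.tendsto_ofReal hupperR
      have h2 := (ENNReal.continuous_rpow_const (y := (2:ℝ)⁻¹)).tendsto (0 : ENNReal)
      have := h2.comp (by simpa using h1)
      simpa [ENNReal.zero_rpow_of_pos, Function.comp_def] using this
    refine tendsto_of_tendsto_of_tendsto_of_le_of_le tendsto_const_nhds hupper
      (fun k => zero_le) (fun k => ?_)
    rw [eLpNorm_weighted_eq c (herrcont k) (hHe k) (hIe k)]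
    exact ENNReal.rpow_le_rpow (ENNReal.ofReal_le_ofReal (hbound k)) (by norm_num)
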